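/- Let G be a graph, A ⊆ V(G), and d a positive integer. Then the number of equivalence classes of ≡^A_{d,1} on subsets of A is at most (d+1)^{mw(A)}, where mw(A) = |{N(v) ∩ (V(G)\A) : v ∈ A}| is the number of distinct neighborhoods in V(G)\A of vertices of A. -/

import Mathlib

open SimpleGraph

variable {V : Type*} [Fintype V] [DecidableEq V]

/-- The (d,1)-neighbor equivalence over `A`, as a setoid on subsets of `A`. -/
def necSetoid (G : SimpleGraph V) (A : Set V) (d : ℕ) : Setoid {S : Set V // S ⊆ A} :=
  ⟨fun B C => ∀ v ∉ A,
      min d (G.neighborSet v ∩ B.1).ncard = min d (G.neighborSet v ∩ C.1).ncard,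
   ⟨fun _ _ _ => rfl,
    fun h v hv => (h v hv).symm,
    fun h1 h2 v hv => (h1 v hv).trans (h2 v hv)⟩⟩

private lemma min_sum_min {ι : Type*} (d : ℕ) (s : Finset ι) (f : ι → ℕ) :
    min d (∑ i ∈ s, min d (f i)) = min d (∑ i ∈ s, f i) := by
  by_cases h : ∀ i ∈ s, f i ≤ d
  · congr 1
    exact Finset.sum_congr rfl fun i hi => min_eq_right (h i hi)
  · push_neg at h
    obtain ⟨i, hi, hdi⟩ := h
    rw [min_eq_left, min_eq_left]
    · exact le_trans hdi.le (Finset.single_le_sum (fun _ _ => Nat.zero_le _) hi)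
    · refine le_trans ?_ (Finset.single_le_sum (f := fun i => min d (f i))
        (fun _ _ => Nat.zero_le _) hi)
      exact le_min le_rfl hdi.le

theorem stmt5 (G : SimpleGraph V) (A : Set V) (d : ℕ) (hd : 0 < d) :
    Nat.card (Quotient (necSetoid G A d)) ≤
      (d + 1) ^ ((fun v => G.neighborSet v ∩ Aᶜ) '' A).ncard := by
  classical
  set T : Set (Set V) := (fun v => G.neighborSet v ∩ Aᶜ) '' A with hT
  haveI : Fintype ↥T := Fintype.ofFinite _
  -- the truncated count of vertices of B of neighborhood-type t
  set cnt : {S : Set V // S ⊆ A} → ↥T → ℕ := fun B t =>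
    (B.1.toFinset.filter (fun w => G.neighborSet w ∩ Aᶜ = t.1)).card with hcnt
  -- the profile of a subset: truncated neighbor counts at each vertex outside A
  set φ : {S : Set V // S ⊆ A} → {v : V // v ∉ A} → Fin (d + 1) := fun B v =>
    ⟨min d (G.neighborSet v.1 ∩ B.1).ncard,
      lt_of_le_of_lt (min_le_left _ _) (Nat.lt_succ_self d)⟩ with hφ
  -- reconstruction of the profile from truncated type counts
  set Φ : (↥T → Fin (d + 1)) → {v : V // v ∉ A} → Fin (d + 1) := fun c v =>
    ⟨min d (∑ t : ↥T, if v.1 ∈ t.1 then (c t).1 else 0),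
      lt_of_le_of_lt (min_le_left _ _) (Nat.lt_succ_self d)⟩ with hΦ
  set cmin : {S : Set V // S ⊆ A} → ↥T → Fin (d + 1) := fun B t =>
    ⟨min d (cnt B t), lt_of_le_of_lt (min_le_left _ _) (Nat.lt_succ_self d)⟩ with hcmin
  -- key counting identity
  have hfib : ∀ (B : {S : Set V // S ⊆ A}) (v : V), v ∉ A →
      (G.neighborSet v ∩ B.1).toFinset.card
        = ∑ t : ↥T, (if v ∈ t.1 then cnt B t else 0) := by
    intro B v hv
    have hmem : ∀ w ∈ (G.neighborSet v ∩ B.1).toFinset,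
        (G.neighborSet w ∩ Aᶜ) ∈ T.toFinset := by
      intro w hw
      rw [Set.mem_toFinset] at hw ⊢
      exact ⟨w, B.2 hw.2, rfl⟩
    rw [Finset.card_eq_sum_card_fiberwise hmem,
      Finset.sum_subtype T.toFinset (fun x => Set.mem_toFinset)
        (fun t => ((G.neighborSet v ∩ B.1).toFinset.filter
          (fun w => G.neighborSet w ∩ Aᶜ = t)).card)]
    refine Finset.sum_congr rfl fun t _ => ?_
    by_cases hvt : v ∈ t.1
    · rw [if_pos hvt]
      congr 1
      refine Finset.ext fun w => ?_
      simp only [Finset.mem_filter, Set.mem_toFinset, Set.mem_inter_iff]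
      constructor
      · rintro ⟨⟨_, hwB⟩, hgw⟩; exact ⟨hwB, hgw⟩
      · rintro ⟨hwB, hgw⟩
        refine ⟨⟨?_, hwB⟩, hgw⟩
        have : v ∈ G.neighborSet w ∩ Aᶜ := hgw ▸ hvt
        exact (G.mem_neighborSet w v).mp this.1 |>.symm
    · rw [if_neg hvt]
      rw [Finset.card_eq_zero, Finset.filter_eq_empty_iff]
      intro w hw
      rw [Set.mem_toFinset, Set.mem_inter_iff] at hw
      intro hgw
      apply hvt
      rw [← hgw]
      exact ⟨(G.mem_neighborSet v w).mp hw.1 |>.symm, hv⟩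
  -- the profile is reconstructed from the truncated counts
  have hrec : ∀ B, Φ (cmin B) = φ B := by
    intro B
    funext v
    apply Fin.ext
    show min d (∑ t : ↥T, if v.1 ∈ t.1 then min d (cnt B t) else 0)
        = min d (G.neighborSet v.1 ∩ B.1).ncard
    have h1 : ∀ t : ↥T, (if v.1 ∈ t.1 then min d (cnt B t) else 0)
        = min d (if v.1 ∈ t.1 then cnt B t else 0) := by
      intro t
      by_cases hvt : v.1 ∈ t.1 <;> simp [hvt]
    rw [Finset.sum_congr rfl (fun t _ => h1 t), min_sum_min, ← hfib B v.1 v.2,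
      Set.ncard_eq_toFinset_card']
  -- well-definedness of the profile on the quotient
  have hwd : ∀ B C, (necSetoid G A d).r B C → φ B = φ C := by
    intro B C h
    funext v
    exact Fin.ext (h v.1 v.2)
  set q : Quotient (necSetoid G A d) → {v : V // v ∉ A} → Fin (d + 1) :=
    Quotient.lift φ hwd with hq
  have hinj : Function.Injective q := by
    intro x y
    induction x using Quotient.ind with | _ B =>
    induction y using Quotient.ind with | _ C =>
    intro h
    refine Quotient.sound fun v hv => ?_
    have := congrFun h ⟨v, hv⟩
    exact congrArg Fin.val this
  have hsub : Set.range q ⊆ Set.range Φ := by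
    rintro _ ⟨x, rfl⟩
    induction x using Quotient.ind with | _ B =>
    exact ⟨cmin B, hrec B⟩
  calc Nat.card (Quotient (necSetoid G A d))
      = Nat.card (Set.range q) := (Nat.card_range_of_injective hinj).symm
    _ ≤ Nat.card (Set.range Φ) := by
        rw [Nat.card_coe_set_eq, Nat.card_coe_set_eq]
        exact Set.ncard_le_ncard hsub (Set.toFinite _)
    _ ≤ Nat.card (↥T → Fin (d + 1)) :=
        Nat.card_le_card_of_surjective (Set.rangeFactorization Φ)
          Set.rangeFactorization_surjective
    _ = (d + 1) ^ T.ncard := by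
        rw [Nat.card_fun, Nat.card_eq_fintype_card, Fintype.card_fin,
          Nat.card_coe_set_eq]
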